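/- arXiv:math/0608183 — 2 statements merged into one kernel-verified Lean document; each statement's English description precedes it below -/
import Mathlib

section
/- Let k be a field and let Q be a finite acyclic quiver with vertex set Q₀ = {0, 1, …, r} (r ≥ 1) in which 0 is the unique source (i.e., every vertex i ≠ 0 is the head of at least one arrow and 0 is the head of none). In the polynomial ring k[y_a : a ∈ Q₁], the ideal B_Y generated by the monomials ∏_{a ∈ Q′₁} y_a, where Q′ ranges over all spanning trees of Q rooted at 0, is equal to the intersection ⋂_{i=1}^{r} J_i, where J_i is the ideal generated by the variables y_a with head(a) = i. -/
open MvPolynomial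

/-- Reachability from `u` to `v` by a directed path using only arrows in the set `T`. -/
def ReachIn {V A : Type*} (tl hd : A → V) (T : Set A) (u v : V) : Prop :=
  Relation.ReflTransGen (fun x y => ∃ a ∈ T, tl a = x ∧ hd a = y) u v

/-- `T` is a spanning tree of the quiver rooted at `0`: it has `|Q₀| - 1` arrows and
every vertex is reachable from `0` by a directed path in `T`. -/
def IsSpanningTree {A : Type*} (r : ℕ) (tl hd : A → Fin (r + 1)) (T : Finset A) : Prop :=
  T.card = r ∧ ∀ v : Fin (r + 1), ReachIn tl hd (↑T) 0 v

/-- Combinatorial heart: any set of arrows containing, for each `i ≠ 0`, an arrow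
with head `i`, contains a spanning tree rooted at `0`. -/
lemma exists_spanning_tree_subset {A : Type*} [Fintype A] [DecidableEq A]
    (r : ℕ) (tl hd : A → Fin (r + 1))
    (hacyclic : ∀ v : Fin (r + 1),
      ¬ Relation.TransGen (fun x y => ∃ a : A, tl a = x ∧ hd a = y) v v)
    (S : Set A) (hS : ∀ i : Fin (r + 1), i ≠ 0 → ∃ a ∈ S, hd a = i) :
    ∃ T : Finset A, IsSpanningTree r tl hd T ∧ ↑T ⊆ S := by
  classical
  -- choose for each nonzero vertex an arrow in S with that head
  rcases isEmpty_or_nonempty A with hA | hA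
  · -- no arrows: then r = 0 and the empty set works
    have hr0 : r = 0 := by
      by_contra h
      have h1 : (⟨1, by omega⟩ : Fin (r+1)) ≠ 0 := by
        intro hEq; exact absurd (congrArg Fin.val hEq) (by simp)
      rcases hS _ h1 with ⟨a, _, _⟩
      exact hA.elim a
    subst hr0
    refine ⟨∅, ⟨rfl, ?_⟩, by simp⟩
    intro v
    have : v = 0 := by
      have := v.isLt; ext; omega
    rw [this]; exact Relation.ReflTransGen.refl
  have hchoice : ∀ i : Fin (r + 1), ∃ a : A, i ≠ 0 → a ∈ S ∧ hd a = i := by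
    intro i
    by_cases h : i = 0
    · exact ⟨Classical.arbitrary A, fun hi => absurd h hi⟩
    · rcases hS i h with ⟨a, haS, hahd⟩
      exact ⟨a, fun _ => ⟨haS, hahd⟩⟩
  choose g hg using hchoice
  set T : Finset A := (Finset.univ.erase (0 : Fin (r+1))).image g with hT
  have hmemT : ∀ i : Fin (r+1), i ≠ 0 → g i ∈ T := by
    intro i hi
    exact Finset.mem_image_of_mem g (Finset.mem_erase.2 ⟨hi, Finset.mem_univ i⟩)
  have hTS : ↑T ⊆ S := by
    intro a ha
    simp only [hT, Finset.coe_image, Set.mem_image, Finset.mem_coe,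
      Finset.mem_erase] at ha
    rcases ha with ⟨i, ⟨hi, _⟩, rfl⟩
    exact (hg i hi).1
  have hcard : T.card = r := by
    rw [hT, Finset.card_image_of_injOn, Finset.card_erase_of_mem (Finset.mem_univ _)]
    · simp
    · intro i hi j hj hij
      have hi' : i ≠ 0 := (Finset.mem_erase.1 hi).1
      have hj' : j ≠ 0 := (Finset.mem_erase.1 hj).1
      rw [← (hg i hi').2, ← (hg j hj').2, hij]
  -- well-foundedness of the edge relation
  set R : Fin (r+1) → Fin (r+1) → Prop := fun x y => ∃ a : A, tl a = x ∧ hd a = y with hR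
  have htrans : IsTrans (Fin (r+1)) (Relation.TransGen R) := inferInstance
  have hirrefl : IsIrrefl (Fin (r+1)) (Relation.TransGen R) := ⟨hacyclic⟩
  have wfT : WellFounded (Relation.TransGen R) :=
    Finite.wellFounded_of_trans_of_irrefl _
  have wfR : WellFounded R := Subrelation.wf (fun h => Relation.TransGen.single h) wfT
  refine ⟨T, ⟨hcard, ?_⟩, hTS⟩
  intro v
  induction v using wfR.induction with
  | _ x IH =>
    by_cases hx : x = 0
    · subst hx; exact Relation.ReflTransGen.refl
    · have hgx := hg x hx
      have hu : R (tl (g x)) x := ⟨g x, rfl, hgx.2⟩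
      exact Relation.ReflTransGen.tail (IH _ hu)
        ⟨g x, by exact_mod_cast hmemT x hx, rfl, hgx.2⟩

lemma prod_X_eq_monomial {A : Type*} [DecidableEq A] {k : Type*} [CommSemiring k]
    (T : Finset A) :
    (∏ a ∈ T, (X a : MvPolynomial A k)) =
      monomial (∑ a ∈ T, Finsupp.single a 1) 1 := by
  induction T using Finset.induction with
  | empty => simp [monomial_zero']
  | insert _ _ h ih =>
    rw [Finset.prod_insert h, Finset.sum_insert h, ih, X, monomial_mul, one_mul]

/-- For a finite acyclic quiver with vertex set `{0, 1, …, r}` (`r ≥ 1`) whose unique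
source is `0`, the ideal of `k[y_a : a ∈ Q₁]` generated by the monomials
`∏_{a ∈ T} y_a`, for `T` ranging over spanning trees rooted at `0`, equals the
intersection over `i ≠ 0` of the ideals generated by the variables `y_a` with
`head a = i`. -/
theorem spanning_tree_ideal_eq_inter (k : Type*) [Field k] (r : ℕ) (hr : 1 ≤ r)
    (A : Type*) [Fintype A] [DecidableEq A]
    (tl hd : A → Fin (r + 1))
    (hacyclic : ∀ v : Fin (r + 1),
      ¬ Relation.TransGen (fun x y => ∃ a : A, tl a = x ∧ hd a = y) v v)
    (hsource : ∀ i : Fin (r + 1), i ≠ 0 → ∃ a : A, hd a = i)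
    (hnohead0 : ∀ a : A, hd a ≠ 0) :
    Ideal.span { m : MvPolynomial A k |
        ∃ T : Finset A, IsSpanningTree r tl hd T ∧ m = ∏ a ∈ T, X a }
      = ⨅ (i : Fin (r + 1)) (_ : i ≠ 0),
          Ideal.span { p : MvPolynomial A k | ∃ a : A, hd a = i ∧ p = X a } := by
  classical
  have hgen : ∀ i : Fin (r+1), { p : MvPolynomial A k | ∃ a : A, hd a = i ∧ p = X a }
      = X '' {a : A | hd a = i} := by
    intro i
    ext p
    simp only [Set.mem_setOf_eq, Set.mem_image]
    constructor
    · rintro ⟨a, h1, rfl⟩; exact ⟨a, h1, rfl⟩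
    · rintro ⟨a, h1, rfl⟩; exact ⟨a, h1, rfl⟩
  have hgenL : { m : MvPolynomial A k |
        ∃ T : Finset A, IsSpanningTree r tl hd T ∧ m = ∏ a ∈ T, X a }
      = (fun s => monomial s (1 : k)) ''
          {s : A →₀ ℕ | ∃ T : Finset A, IsSpanningTree r tl hd T ∧
            s = ∑ a ∈ T, Finsupp.single a 1} := by
    ext m
    simp only [Set.mem_setOf_eq, Set.mem_image]
    constructor
    · rintro ⟨T, hT, rfl⟩
      exact ⟨∑ a ∈ T, Finsupp.single a 1, ⟨T, hT, rfl⟩, (prod_X_eq_monomial T).symm⟩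
    · rintro ⟨s, ⟨T, hT, rfl⟩, rfl⟩
      exact ⟨T, hT, (prod_X_eq_monomial T).symm⟩
  apply le_antisymm
  · -- span of spanning-tree monomials ⊆ each Jᵢ
    rw [Ideal.span_le]
    rintro m ⟨T, hT, rfl⟩
    simp only [SetLike.mem_coe, Ideal.mem_iInf]
    intro i hi
    -- the path from 0 to i in T ends with an arrow with head i
    have := hT.2 i
    rcases Relation.ReflTransGen.cases_tail this with h0 | ⟨u, _, a, haT, _, hahd⟩
    · exact absurd h0 hi
    · have hXa : (X a : MvPolynomial A k) ∈
          Ideal.span { p : MvPolynomial A k | ∃ a : A, hd a = i ∧ p = X a } :=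
        Ideal.subset_span ⟨a, hahd, rfl⟩
      have haT' : a ∈ T := haT
      rw [← Finset.mul_prod_erase T _ haT']
      exact Ideal.mul_mem_right _ _ hXa
  · -- ⋂ Jᵢ ⊆ span of spanning-tree monomials
    intro p hp
    simp only [Ideal.mem_iInf] at hp
    rw [hgenL, mem_ideal_span_monomial_image]
    intro m hm
    -- from hp: every i ≠ 0 has an arrow a with hd a = i and m a ≠ 0
    have hSm : ∀ i : Fin (r+1), i ≠ 0 → ∃ a ∈ {a : A | m a ≠ 0}, hd a = i := by
      intro i hi
      have := hp i hi
      rw [hgen i, mem_ideal_span_X_image] at this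
      rcases this m hm with ⟨a, ha1, ha2⟩
      exact ⟨a, ha2, ha1⟩
    rcases exists_spanning_tree_subset r tl hd hacyclic _ hSm with ⟨T, hT, hTS⟩
    refine ⟨∑ a ∈ T, Finsupp.single a 1, ⟨T, hT, rfl⟩, ?_⟩
    intro a
    rw [Finset.sum_apply']
    by_cases ha : a ∈ T
    · have : m a ≠ 0 := hTS ha
      calc ∑ b ∈ T, (Finsupp.single b 1) a = 1 := by
            rw [Finset.sum_eq_single a (fun b _ hb => Finsupp.single_eq_of_ne' hb)
              (fun h => absurd ha h)]
            simp
        _ ≤ m a := Nat.one_le_iff_ne_zero.2 this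
    · calc ∑ b ∈ T, (Finsupp.single b 1) a = 0 := by
            apply Finset.sum_eq_zero
            intro b hb
            exact Finsupp.single_eq_of_ne' (fun h => ha (h ▸ hb))
        _ ≤ m a := Nat.zero_le _
end

section
/- Let k be a field, let n, m, s be natural numbers, and let deg : ℤⁿ → ℤˢ and d : ℤⁿ → ℤᵐ be group homomorphisms. Grade the polynomial ring S = k[x₁, …, xₙ] by ℤˢ, declaring the monomial x^u (u ∈ ℕⁿ) to be homogeneous of degree deg(u). Let Φ : S → k[ℤᵐ] be the k-algebra homomorphism to the group algebra of ℤᵐ determined by Φ(x^u) = e^{d(u)}. Then the toric ideal I = ( x^u − x^v : u, v ∈ ℕⁿ, d(u) = d(v) and deg(u) = deg(v) ) is equal to the ideal of S generated by the deg-homogeneous elements of ker Φ. -/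
open MvPolynomial

/-- Let `deg : ℤⁿ → ℤˢ` and `d : ℤⁿ → ℤᵐ` be group homomorphisms, grade
`S = k[x₁, …, xₙ]` by `ℤˢ` via `deg`, and let `Φ : S → k[ℤᵐ]` be the `k`-algebra
homomorphism to the group algebra of `ℤᵐ` determined by `Φ(x^u) = e^{d(u)}`.  Then the
toric ideal `I = (x^u − x^v : d(u) = d(v), deg(u) = deg(v))` equals the ideal generated
by the `deg`-homogeneous elements of `ker Φ`. -/
theorem toric_ideal_eq_span_homogeneous_kernel (k : Type*) [Field k] (n m s : ℕ)
    (deg : (Fin n → ℤ) →+ (Fin s → ℤ)) (d : (Fin n → ℤ) →+ (Fin m → ℤ))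
    (Φ : MvPolynomial (Fin n) k →ₐ[k] AddMonoidAlgebra k (Fin m → ℤ))
    (hΦ : ∀ u : Fin n →₀ ℕ,
      Φ (monomial u 1) = AddMonoidAlgebra.single (d (fun i => (u i : ℤ))) 1) :
    Ideal.span { p : MvPolynomial (Fin n) k | ∃ u v : Fin n →₀ ℕ,
          d (fun i => (u i : ℤ)) = d (fun i => (v i : ℤ)) ∧
          deg (fun i => (u i : ℤ)) = deg (fun i => (v i : ℤ)) ∧
          p = monomial u 1 - monomial v 1 }
      = Ideal.span { p : MvPolynomial (Fin n) k |
          (∃ g : Fin s → ℤ, ∀ u ∈ p.support, deg (fun i => (u i : ℤ)) = g) ∧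
          Φ p = 0 } := by
  have hΦp : ∀ p : MvPolynomial (Fin n) k,
      Φ p = ∑ w ∈ p.support,
        AddMonoidAlgebra.single (d (fun i => (w i : ℤ))) (coeff w p) := by
    intro p
    conv_lhs => rw [p.as_sum]
    rw [map_sum]
    refine Finset.sum_congr rfl fun w _ => ?_
    have h1 : (monomial w) (coeff w p) = (coeff w p) • (monomial w (1:k)) := by
      rw [smul_monomial, smul_eq_mul, mul_one]
    rw [h1, map_smul, hΦ w]
    simp [AddMonoidAlgebra.smul_single]
  apply le_antisymm
  · rw [Ideal.span_le]
    rintro p ⟨u, v, hd, hdeg, rfl⟩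
    refine Ideal.subset_span ⟨⟨deg (fun i => (u i : ℤ)), ?_⟩, ?_⟩
    · intro w hw
      have hsub := MvPolynomial.support_sub (Fin n) (monomial u (1:k)) (monomial v 1)
      have hw' := hsub hw
      rw [Finset.mem_union] at hw'
      rcases hw' with h | h
      · have := MvPolynomial.support_monomial_subset h
        simp only [Finset.mem_singleton] at this
        subst this; rfl
      · have := MvPolynomial.support_monomial_subset h
        simp only [Finset.mem_singleton] at this
        subst this; exact hdeg.symm
    · rw [map_sub, hΦ u, hΦ v, hd, sub_self]
  · rw [Ideal.span_le]
    rintro p ⟨⟨g, hg⟩, hker⟩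
    generalize hc : p.support.card = N
    induction N using Nat.strong_induction_on generalizing p g with
    | _ N ih =>
      by_cases hp0 : p = 0
      · subst hp0; exact Ideal.zero_mem _
      · obtain ⟨u, hu⟩ := Finset.nonempty_iff_ne_empty.mpr
          (fun h => hp0 (MvPolynomial.support_eq_empty.mp h))
        have hcu : coeff u p ≠ 0 := MvPolynomial.mem_support_iff.mp hu
        have key : (Φ p).coeff (d (fun i => (u i : ℤ))) = 0 := by rw [hker]; rfl
        rw [hΦp, AddMonoidAlgebra.coeff_sum, Finset.sum_apply'] at key
        simp only [AddMonoidAlgebra.coeff_single, Finsupp.single_apply] at key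
        -- find v
        obtain ⟨v, hv, hvu, hDv⟩ : ∃ v ∈ p.support, v ≠ u ∧
            d (fun i => (v i : ℤ)) = d (fun i => (u i : ℤ)) := by
          by_contra h
          push_neg at h
          have : ∑ w ∈ p.support,
              (if d (fun i => (w i : ℤ)) = d (fun i => (u i : ℤ)) then coeff w p else 0)
              = coeff u p := by
            rw [Finset.sum_eq_single u]
            · simp
            · intro w hw hwu
              rw [if_neg (h w hw hwu)]
            · intro h'; exact absurd hu h'
          rw [this] at key; exact hcu key
        set c := coeff u p with hcdef
        set q := p - c • (monomial u 1 - monomial v 1) with hq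
        have hqsupp : q.support ⊆ p.support.erase u := by
          intro w hw
          have hcw : coeff w q ≠ 0 := MvPolynomial.mem_support_iff.mp hw
          rw [Finset.mem_erase]
          constructor
          · rintro rfl
            apply hcw
            simp only [hq, coeff_sub, coeff_smul, coeff_monomial]
            simp [if_neg hvu, hcdef]
          · by_contra hwp
            apply hcw
            have hwu : w ≠ u := by rintro rfl; exact hwp hu
            have hwv : w ≠ v := by rintro rfl; exact hwp hv
            have : coeff w p = 0 := MvPolynomial.notMem_support_iff.mp hwp
            simp only [hq, coeff_sub, coeff_smul, coeff_monomial]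
            rw [if_neg (fun h => hwu h.symm), if_neg (fun h => hwv h.symm), this]
            simp
        have hqcard : q.support.card < N := by
          calc q.support.card ≤ (p.support.erase u).card := Finset.card_le_card hqsupp
            _ < p.support.card := Finset.card_erase_lt_of_mem hu
            _ = N := hc
        have hqg : ∀ w ∈ q.support, deg (fun i => (w i : ℤ)) = g := by
          intro w hw
          exact hg w (Finset.mem_of_mem_erase (hqsupp hw))
        have hqker : Φ q = 0 := by
          rw [hq, map_sub, map_smul, map_sub, hΦ u, hΦ v, hDv, sub_self, smul_zero,
            hker, sub_zero]
        have hqmem := ih q.support.card hqcard hqker g hqg rfl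
        have hbin : (monomial u (1:k) - monomial v 1) ∈ Ideal.span
            { p : MvPolynomial (Fin n) k | ∃ u v : Fin n →₀ ℕ,
              d (fun i => (u i : ℤ)) = d (fun i => (v i : ℤ)) ∧
              deg (fun i => (u i : ℤ)) = deg (fun i => (v i : ℤ)) ∧
              p = monomial u 1 - monomial v 1 } :=
          Ideal.subset_span ⟨u, v, hDv.symm, by rw [hg u hu, hg v hv], rfl⟩
        have : p = q + c • (monomial u 1 - monomial v 1) := by rw [hq]; ring
        rw [this, MvPolynomial.smul_eq_C_mul]
        exact Ideal.add_mem _ hqmem (Ideal.mul_mem_left _ _ hbin)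
end
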